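/- In A one has the identity v = (1/N)·(Σ_{k=0}^{N−1} (−1)^k t^{k²})·(Σ_{j=0}^{N−1} (−1)^j t^{−j²} K^{2j+N}). -/

import Mathlib

open Finset TensorProduct

noncomputable section

/-- The quantum group `U_t(u(1)) = ℂ[ℤ_{2N}]`, the complex group algebra of the cyclic group
`ℤ_{2N}`. -/
abbrev QG (N : ℕ) := MonoidAlgebra ℂ (Multiplicative (ZMod (2 * N)))

/-- The basis element `K^j`, `j ∈ ℤ_{2N}` (`K` is the image of the fixed generator `1`). -/
def KK (N : ℕ) (j : ZMod (2 * N)) : QG N :=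
  MonoidAlgebra.single (Multiplicative.ofAdd j) 1

/-- `t = exp(πi/N)`, a primitive `2N`-th root of unity. -/
def tq (N : ℕ) : ℂ := Complex.exp ((Real.pi : ℂ) * Complex.I / N)

/-- The universal `R`-matrix `R = (1/2N) Σ_{j,k ∈ ℤ_{2N}} t^{−jk} K^j ⊗ K^k`. -/
def Rmat (N : ℕ) : QG N ⊗[ℂ] QG N :=
  (2 * (N : ℂ))⁻¹ • ∑ j ∈ Finset.range (2 * N), ∑ k ∈ Finset.range (2 * N),
    tq N ^ (-((j : ℤ) * (k : ℤ))) • (KK N (j : ZMod (2 * N)) ⊗ₜ[ℂ] KK N (k : ZMod (2 * N)))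

/-- The universal twist `v = (1/2N) Σ_{j,k ∈ ℤ_{2N}} t^{(k+j)k} K^j`. -/
def vel (N : ℕ) : QG N :=
  (2 * (N : ℂ))⁻¹ • ∑ j ∈ Finset.range (2 * N), ∑ k ∈ Finset.range (2 * N),
    tq N ^ ((k + j) * k) • KK N (j : ZMod (2 * N))

/-- Sums over `range n` of a function of period `n` are shift-invariant. -/
lemma aux_shift {A : Type*} [AddCommGroup A] (n : ℕ) (f : ℕ → A)
    (hf : ∀ k, f (k + n) = f k) (s : ℕ) :
    ∑ k ∈ Finset.range n, f (k + s) = ∑ k ∈ Finset.range n, f k := by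
  induction s with
  | zero => simp
  | succ s ih =>
    have h1 : ∑ k ∈ Finset.range n, f (k + (s + 1)) = ∑ k ∈ Finset.range n, f (k + 1 + s) := by
      refine Finset.sum_congr rfl fun k _ => ?_
      congr 1
      omega
    have h2 : ∑ k ∈ Finset.range (n + 1), f (k + s)
        = (∑ k ∈ Finset.range n, f (k + 1 + s)) + f (0 + s) :=
      Finset.sum_range_succ' (fun k => f (k + s)) n
    have h3 : ∑ k ∈ Finset.range (n + 1), f (k + s)
        = (∑ k ∈ Finset.range n, f (k + s)) + f (n + s) :=
      Finset.sum_range_succ (fun k => f (k + s)) n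
    have h4 : f (n + s) = f (0 + s) := by
      rw [zero_add, add_comm n s, hf s]
    have h5 := h2.symm.trans h3
    rw [h4] at h5
    rw [h1, add_right_cancel h5, ih]

/-- Splitting a sum over `range (2n)` into even- and odd-indexed parts. -/
lemma aux_even_odd {A : Type*} [AddCommMonoid A] (n : ℕ) (f : ℕ → A) :
    ∑ k ∈ Finset.range (2 * n), f k
      = (∑ i ∈ Finset.range n, f (2 * i)) + ∑ i ∈ Finset.range n, f (2 * i + 1) := by
  induction n with
  | zero => simp
  | succ n ih =>
    rw [show 2 * (n + 1) = 2 * n + 1 + 1 from by ring, Finset.sum_range_succ,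
      Finset.sum_range_succ, Finset.sum_range_succ (fun i => f (2 * i)),
      Finset.sum_range_succ (fun i => f (2 * i + 1)), ih]
    abel

/-- In `A` one has `v = (1/N)·(Σ_{k=0}^{N−1} (−1)^k t^{k²})·(Σ_{j=0}^{N−1} (−1)^j t^{−j²} K^{2j+N})`. -/
theorem stmt_12 (N : ℕ) (hpos : 0 < N) (hN : Even N) :
    vel N
      = ((N : ℂ)⁻¹ * ∑ k ∈ Finset.range N, (-1 : ℂ) ^ k * tq N ^ (k ^ 2)) •
          ∑ j ∈ Finset.range N, ((-1 : ℂ) ^ j * tq N ^ (-((j : ℤ) ^ 2))) •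
            KK N ((2 * j + N : ℕ) : ZMod (2 * N)) := by
  obtain ⟨M, rfl⟩ := hN
  unfold vel
  set n : ℕ := M + M with hn
  set t : ℂ := tq n with htdef
  set H : ℂ := ∑ k ∈ Finset.range n, (-1 : ℂ) ^ k * t ^ (k ^ 2) with hHdef
  have ht0 : t ≠ 0 := Complex.exp_ne_zero _
  have hnC : (n : ℂ) ≠ 0 := Nat.cast_ne_zero.mpr hpos.ne'
  have htN : t ^ n = -1 := by
    rw [htdef, tq, ← Complex.exp_nat_mul,
      show (n : ℂ) * ((Real.pi : ℂ) * Complex.I / n) = (Real.pi : ℂ) * Complex.I from by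
        field_simp]
    exact Complex.exp_pi_mul_I
  have ht2 : t ^ (2 * n) = 1 := by rw [mul_comm, pow_mul, htN]; norm_num
  have htm : ∀ a b : ℕ, t ^ (a + 2 * n * b) = t ^ a := by
    intro a b
    rw [pow_add, pow_mul, ht2, one_pow, mul_one]
  have hNeven : ∀ k : ℕ, t ^ (n * k) = (-1 : ℂ) ^ k := by
    intro k
    rw [pow_mul, htN]
  have hg2 : ∀ k, t ^ ((k + 2 * n) * (k + 2 * n)) = t ^ (k * k) := by
    intro k
    rw [show (k + 2 * n) * (k + 2 * n) = k * k + 2 * n * (2 * k + 2 * n) from by ring, htm]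
  have hg1 : ∀ k, t ^ ((k + n) * (k + n)) = t ^ (k * k) := by
    intro k
    rw [show (k + n) * (k + n) = k * k + n * (2 * k + n) from by ring, pow_add, hNeven,
      Even.neg_one_pow ⟨k + M, by omega⟩, mul_one]
  set G : ℂ := ∑ k ∈ Finset.range (2 * n), t ^ (k * k) with hGdef
  -- the odd coefficients vanish
  have hodd : ∀ m : ℕ, (∑ k ∈ Finset.range (2 * n), t ^ ((k + (2 * m + 1)) * k)) = 0 := by
    intro m
    set f : ℕ → ℂ := fun k => t ^ ((k + (2 * m + 1)) * k) with hfdef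
    have hper : ∀ k, f (k + 2 * n) = f k := by
      intro k
      simp only [hfdef]
      rw [show (k + 2 * n + (2 * m + 1)) * (k + 2 * n)
          = (k + (2 * m + 1)) * k + 2 * n * (2 * k + 2 * m + 1 + 2 * n) from by ring, htm]
    have hneg : ∀ k, f (k + n) = -f k := by
      intro k
      simp only [hfdef]
      rw [show (k + n + (2 * m + 1)) * (k + n)
          = (k + (2 * m + 1)) * k + n * (2 * k + (2 * m + 1) + n) from by ring,
        pow_add, hNeven, Odd.neg_one_pow ⟨k + m + M, by omega⟩, mul_neg_one]
    have hkey : (∑ k ∈ Finset.range (2 * n), f k) = -∑ k ∈ Finset.range (2 * n), f k := by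
      conv_lhs => rw [← aux_shift (2 * n) f hper n]
      rw [Finset.sum_congr rfl fun k _ => hneg k, Finset.sum_neg_distrib]
    have : (∑ k ∈ Finset.range (2 * n), f k) = 0 := by linear_combination hkey / 2
    exact this
  -- the even coefficients
  have heven : ∀ m : ℕ,
      (∑ k ∈ Finset.range (2 * n), t ^ ((k + 2 * m) * k)) = (t ^ (m * m))⁻¹ * G := by
    intro m
    have key : t ^ (m * m) * (∑ k ∈ Finset.range (2 * n), t ^ ((k + 2 * m) * k)) = G := by
      rw [Finset.mul_sum,
        Finset.sum_congr rfl (fun k _ => by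
          rw [← pow_add, show m * m + (k + 2 * m) * k = (k + m) * (k + m) from by ring] :
          ∀ k ∈ Finset.range (2 * n),
            t ^ (m * m) * t ^ ((k + 2 * m) * k) = t ^ ((k + m) * (k + m))),
        hGdef]
      exact aux_shift (2 * n) (fun k => t ^ (k * k)) hg2 m
    rw [← key, inv_mul_cancel_left₀ (pow_ne_zero _ ht0)]
  -- the Gauss sum identity G = 2 t^{M²} H
  have hT : (∑ k ∈ Finset.range n, t ^ (k * k)) = t ^ (M * M) * H := by
    rw [hHdef, Finset.mul_sum,
      Finset.sum_congr rfl (fun k _ => by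
        rw [← hNeven k, ← pow_add, ← pow_add,
          show M * M + (n * k + k ^ 2) = (k + M) * (k + M) from by rw [hn]; ring] :
        ∀ k ∈ Finset.range n,
          t ^ (M * M) * ((-1 : ℂ) ^ k * t ^ (k ^ 2)) = t ^ ((k + M) * (k + M)))]
    exact (aux_shift n (fun k => t ^ (k * k)) hg1 M).symm
  have hG : G = 2 * (t ^ (M * M) * H) := by
    rw [hGdef, two_mul n, Finset.sum_range_add]
    rw [Finset.sum_congr rfl (fun k _ => by
        rw [add_comm n k]; exact hg1 k :
        ∀ k ∈ Finset.range n, t ^ ((n + k) * (n + k)) = t ^ (k * k)), hT]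
    ring
  -- the shifted basis function
  set F : ℕ → QG n := fun m => (t ^ (m * m))⁻¹ • KK n ((2 * m : ℕ) : ZMod (2 * n)) with hFdef
  have hFper : ∀ m, F (m + n) = F m := by
    intro m
    simp only [hFdef]
    rw [hg1 m, show ((2 * (m + n) : ℕ) : ZMod (2 * n)) = ((2 * m : ℕ) : ZMod (2 * n)) from by
      rw [show 2 * (m + n) = 2 * m + 2 * n from by ring, Nat.cast_add, ZMod.natCast_self,
        add_zero]]
  have hF : ∀ j : ℕ, F (j + M)
      = ((-1 : ℂ) ^ j * (t ^ (j * j))⁻¹ * (t ^ (M * M))⁻¹) •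
          KK n ((2 * j + n : ℕ) : ZMod (2 * n)) := by
    intro j
    simp only [hFdef]
    congr 1
    · have hinv : ((-1 : ℂ) ^ j)⁻¹ = (-1 : ℂ) ^ j := by
        rw [← inv_pow, inv_neg_one]
      rw [show (j + M) * (j + M) = j * j + (n * j + M * M) from by rw [hn]; ring,
        pow_add, pow_add, hNeven, mul_inv, mul_inv, hinv]
      ring
    · congr 1
      rw [hn]
      ring
  -- now assemble everything
  have step1 : ∀ j ∈ Finset.range (2 * n),
      (∑ k ∈ Finset.range (2 * n), t ^ ((k + j) * k) • KK n (j : ZMod (2 * n)))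
        = (∑ k ∈ Finset.range (2 * n), t ^ ((k + j) * k)) • KK n (j : ZMod (2 * n)) :=
    fun j _ => (Finset.sum_smul).symm
  rw [Finset.sum_congr rfl step1,
    aux_even_odd n (fun j => (∑ k ∈ Finset.range (2 * n), t ^ ((k + j) * k)) •
      KK n (j : ZMod (2 * n)))]
  have step2 : ∀ i ∈ Finset.range n,
      (∑ k ∈ Finset.range (2 * n), t ^ ((k + (2 * i + 1)) * k)) •
        KK n ((2 * i + 1 : ℕ) : ZMod (2 * n)) = 0 := by
    intro i _
    rw [hodd i, zero_smul]
  have step3 : ∀ i ∈ Finset.range n,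
      (∑ k ∈ Finset.range (2 * n), t ^ ((k + 2 * i) * k)) •
        KK n ((2 * i : ℕ) : ZMod (2 * n)) = G • F i := by
    intro i _
    rw [heven i, hFdef]
    simp only []
    rw [smul_smul, mul_comm ((t ^ (i * i))⁻¹) G]
  rw [Finset.sum_congr rfl step2, Finset.sum_congr rfl step3, Finset.sum_const_zero, add_zero,
    ← Finset.smul_sum, ← aux_shift n F hFper M, Finset.sum_congr rfl (fun j _ => hF j)]
  rw [Finset.smul_sum, Finset.smul_sum, Finset.smul_sum]
  refine Finset.sum_congr rfl fun j _ => ?_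
  rw [smul_smul, smul_smul, smul_smul]
  congr 1
  have hz : t ^ (-((j : ℤ) ^ 2)) = (t ^ (j * j))⁻¹ := by
    rw [zpow_neg, show ((j : ℤ) ^ 2) = ((j * j : ℕ) : ℤ) from by push_cast; ring, zpow_natCast]
  rw [hz, hG]
  have h1 : (t ^ (M * M)) ≠ 0 := pow_ne_zero _ ht0
  have h2 : (t ^ (j * j)) ≠ 0 := pow_ne_zero _ ht0
  field_simp
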